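/- Let Z be a standard Gaussian random variable (law N(0,1)), and let F > 0, K > 0, σ > 0. Then E[(K − F e^{σZ − σ²/2})₊] = K·Φ(−d₋) − F·Φ(−d₊), where d± = (log(F/K))/σ ± σ/2 and x₊ = max(x,0). This lognormal expectation is the key computation yielding the zero-coupon bond put option price Put_ZC(t,T,S,K) = K P(t,T)Φ(d₂(t,T)) − P(t,S)Φ(d₁(t,T)) in Proposition 2.3, with F = P(t,S)/P(t,T) and σ = v(t,T,S)√(T−t). -/

import Mathlib

open MeasureTheory ProbabilityTheory
open Real

/-- The cumulative distribution function of the standard normal distribution. -/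
noncomputable def stdNormalCDF (x : ℝ) : ℝ :=
  ∫ z in Set.Iic x, Real.exp (-z ^ 2 / 2) / Real.sqrt (2 * Real.pi)

lemma stdNormalCDF_eq (x : ℝ) :
    stdNormalCDF x = ∫ z in Set.Iic x, gaussianPDFReal 0 1 z := by
  unfold stdNormalCDF gaussianPDFReal
  refine setIntegral_congr_fun measurableSet_Iic fun z _ => ?_
  push_cast
  rw [div_eq_inv_mul]
  norm_num

lemma pdf_shift (m c : ℝ) :
    ∫ z in Set.Iic c, gaussianPDFReal m 1 z = stdNormalCDF (c - m) := by
  rw [stdNormalCDF_eq]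
  have h := (measurePreserving_add_right volume m).setIntegral_preimage_emb
    (measurableEmbedding_addRight m) (gaussianPDFReal m 1) (Set.Iic c)
  have hpre : (· + m) ⁻¹' Set.Iic c = Set.Iic (c - m) := by
    ext x; simp [le_sub_iff_add_le]
  rw [hpre] at h
  rw [← h]
  refine setIntegral_congr_fun measurableSet_Iic fun z _ => ?_
  rw [gaussianPDFReal_add]
  simp

lemma pdf_mul_exp (σ z : ℝ) :
    gaussianPDFReal 0 1 z * Real.exp (σ * z - σ ^ 2 / 2) = gaussianPDFReal σ 1 z := by
  unfold gaussianPDFReal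
  push_cast
  rw [mul_assoc, ← Real.exp_add]
  ring_nf

/-- The lognormal (Black) put expectation: for a standard Gaussian `Z` and `F, K, σ > 0`,
`E[(K − F e^{σZ − σ²/2})₊] = K Φ(−d₋) − F Φ(−d₊)` with `d± = log(F/K)/σ ± σ/2`. -/
theorem lognormal_put_expectation (F K σ : ℝ) (hF : 0 < F) (hK : 0 < K) (hσ : 0 < σ) :
    (∫ z, max (K - F * Real.exp (σ * z - σ ^ 2 / 2)) 0 ∂(gaussianReal 0 1))
      = K * stdNormalCDF (-(Real.log (F / K) / σ - σ / 2))
        - F * stdNormalCDF (-(Real.log (F / K) / σ + σ / 2)) := by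
  set c : ℝ := Real.log (K / F) / σ + σ / 2 with hc
  have hc1 : -(Real.log (F / K) / σ - σ / 2) = c := by
    rw [hc, Real.log_div hK.ne' hF.ne', Real.log_div hF.ne' hK.ne']; ring
  have hc2 : -(Real.log (F / K) / σ + σ / 2) = c - σ := by
    rw [hc, Real.log_div hK.ne' hF.ne', Real.log_div hF.ne' hK.ne']; ring
  rw [hc1, hc2, ← pdf_shift, stdNormalCDF_eq]
  -- turn the gaussian integral into a Lebesgue integral with density
  rw [gaussianReal_of_var_ne_zero 0 one_ne_zero]
  unfold gaussianPDF
  have hmeas : Measurable fun x => (gaussianPDFReal 0 1 x).toNNReal :=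
    (measurable_gaussianPDFReal 0 1).real_toNNReal
  rw [show (fun x => ENNReal.ofReal (gaussianPDFReal 0 1 x))
      = fun x => ((gaussianPDFReal 0 1 x).toNNReal : ENNReal) from rfl,
    integral_withDensity_eq_integral_smul hmeas]
  have key : ∀ z : ℝ, (gaussianPDFReal 0 1 z).toNNReal • max (K - F * Real.exp (σ * z - σ ^ 2 / 2)) 0
      = Set.indicator (Set.Iic c)
          (fun z => K * gaussianPDFReal 0 1 z - F * gaussianPDFReal σ 1 z) z := by
    intro z
    have hsmul : ((gaussianPDFReal 0 1 z).toNNReal : ℝ) = gaussianPDFReal 0 1 z :=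
      Real.coe_toNNReal _ (gaussianPDFReal_nonneg _ _ _)
    have hiff : z ≤ c ↔ 0 ≤ K - F * Real.exp (σ * z - σ ^ 2 / 2) := by
      rw [sub_nonneg, ← le_div_iff₀' hF, ← Real.le_log_iff_exp_le (by positivity),
        show (z ≤ c ↔ σ * z ≤ σ * c) from (mul_le_mul_iff_right₀ hσ).symm, hc, mul_add,
        mul_div_cancel₀ _ hσ.ne']
      constructor <;> intro h <;> nlinarith
    by_cases hz : z ≤ c
    · rw [Set.indicator_of_mem (Set.mem_Iic.mpr hz), NNReal.smul_def, hsmul,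
        max_eq_left (hiff.mp hz), ← pdf_mul_exp σ z, smul_eq_mul]
      ring
    · have h0 : K - F * Real.exp (σ * z - σ ^ 2 / 2) ≤ 0 := by
        by_contra h; exact hz (hiff.mpr (by linarith))
      rw [Set.indicator_of_notMem (by simpa using hz), max_eq_right h0, smul_zero]
  simp_rw [key]
  rw [integral_indicator measurableSet_Iic,
    integral_sub (((integrable_gaussianPDFReal 0 1).const_mul K).restrict)
      (((integrable_gaussianPDFReal σ 1).const_mul F).restrict),
    integral_const_mul, integral_const_mul]
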